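/- The block matrix 𝒜 = [[A, Bᵀ, 0], [B, 0, Cᵀ], [0, C, 0]] is nonsingular, when A ∈ ℝ^{n×n} is symmetric positive definite, B ∈ ℝ^{m×n} has full row rank, and C ∈ ℝ^{l×m} has full row rank. -/

import Mathlib

open Matrix

noncomputable section

/-- 3×3 block matrix with blocks of sizes n, m, l. -/
def blk3 {n m l : ℕ} (M11 : Matrix (Fin n) (Fin n) ℝ) (M12 : Matrix (Fin n) (Fin m) ℝ)
    (M13 : Matrix (Fin n) (Fin l) ℝ) (M21 : Matrix (Fin m) (Fin n) ℝ)
    (M22 : Matrix (Fin m) (Fin m) ℝ) (M23 : Matrix (Fin m) (Fin l) ℝ)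
    (M31 : Matrix (Fin l) (Fin n) ℝ) (M32 : Matrix (Fin l) (Fin m) ℝ)
    (M33 : Matrix (Fin l) (Fin l) ℝ) :
    Matrix (Fin n ⊕ (Fin m ⊕ Fin l)) (Fin n ⊕ (Fin m ⊕ Fin l)) ℝ :=
  fromBlocks M11 (fromCols M12 M13) (fromRows M21 M31) (fromBlocks M22 M23 M32 M33)

/-- μ ∈ ℂ is an eigenvalue of the real matrix M (viewed over ℂ). -/
def IsEig {k : Type*} [Fintype k] (M : Matrix k k ℝ) (μ : ℂ) : Prop :=
  ∃ v : k → ℂ, v ≠ 0 ∧ (M.map (fun x : ℝ => (x : ℂ))) *ᵥ v = μ • v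

lemma full_col_rank_kernel {p q : ℕ} (M : Matrix (Fin p) (Fin q) ℝ) (h : M.rank = q)
    {v : Fin q → ℝ} (hv : M *ᵥ v = 0) : v = 0 := by
  have hrn := M.mulVecLin.finrank_range_add_finrank_ker
  rw [Module.finrank_pi, Fintype.card_fin] at hrn
  have hdef : M.rank = Module.finrank ℝ (LinearMap.range M.mulVecLin) := rfl
  have hk : Module.finrank ℝ (LinearMap.ker M.mulVecLin) = 0 := by omega
  rw [Submodule.finrank_eq_zero] at hk
  have : v ∈ LinearMap.ker M.mulVecLin := hv
  rw [hk] at this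
  exact this

theorem stmt0 {n m l : ℕ} (A : Matrix (Fin n) (Fin n) ℝ) (B : Matrix (Fin m) (Fin n) ℝ)
    (C : Matrix (Fin l) (Fin m) ℝ) (hA : A.PosDef) (hB : B.rank = m) (hC : C.rank = l) :
    IsUnit (blk3 A Bᵀ 0 B 0 Cᵀ 0 C 0) := by
  rw [← Matrix.mulVec_injective_iff_isUnit]
  rw [show (blk3 A Bᵀ 0 B 0 Cᵀ 0 C 0).mulVec = (blk3 A Bᵀ 0 B 0 Cᵀ 0 C 0).mulVecLin from rfl,
    ← LinearMap.ker_eq_bot, LinearMap.ker_eq_bot']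
  intro v hv
  set x : Fin n → ℝ := v ∘ Sum.inl with hx
  set y : Fin m → ℝ := v ∘ Sum.inr ∘ Sum.inl with hy
  set z : Fin l → ℝ := v ∘ Sum.inr ∘ Sum.inr with hz
  have hvdec : v = Sum.elim x (Sum.elim y z) := by
    funext i; rcases i with i | i | i <;> rfl
  rw [hvdec] at hv
  simp only [mulVecLin_apply, blk3, fromBlocks_mulVec, fromCols_mulVec_sumElim,
    fromRows_mulVec, Matrix.zero_mulVec, add_zero, zero_add, Sum.elim_comp_inl, Sum.elim_comp_inr] at hv
  have h1 : A *ᵥ x + Bᵀ *ᵥ y = 0 := funext fun i => congr_fun hv (Sum.inl i)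
  have h2 : B *ᵥ x + Cᵀ *ᵥ z = 0 := by
    funext i
    have := congr_fun hv (Sum.inr (Sum.inl i))
    simpa [fromBlocks_mulVec, Matrix.zero_mulVec] using this
  have h3 : C *ᵥ y = 0 := by
    funext i
    have := congr_fun hv (Sum.inr (Sum.inr i))
    simpa [fromBlocks_mulVec, Matrix.zero_mulVec] using this
  -- x = 0
  have hxAx : x ⬝ᵥ (A *ᵥ x) = 0 := by
    have e1 : x ⬝ᵥ (A *ᵥ x) + x ⬝ᵥ (Bᵀ *ᵥ y) = 0 := by
      rw [← dotProduct_add, h1, dotProduct_zero]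
    have e2 : x ⬝ᵥ (Bᵀ *ᵥ y) = (B *ᵥ x) ⬝ᵥ y := by
      rw [dotProduct_mulVec, vecMul_transpose]
    have e3 : B *ᵥ x = -(Cᵀ *ᵥ z) := by
      rw [eq_neg_iff_add_eq_zero]; exact h2
    have e4 : (Cᵀ *ᵥ z) ⬝ᵥ y = 0 := by
      rw [dotProduct_comm, dotProduct_mulVec, vecMul_transpose, dotProduct_comm, h3,
        dotProduct_zero]
    rw [e2, e3, neg_dotProduct, e4, neg_zero, add_zero] at e1
    exact e1
  have hx0 : x = 0 := by
    by_contra hne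
    have := hA.dotProduct_mulVec_pos hne
    simp only [RCLike.star_def, star_trivial] at this
    exact this.ne' hxAx
  -- y = 0
  have hy0 : y = 0 := by
    apply full_col_rank_kernel Bᵀ (by rw [rank_transpose]; exact hB)
    rw [hx0, Matrix.mulVec_zero, zero_add] at h1
    exact h1
  -- z = 0
  have hz0 : z = 0 := by
    apply full_col_rank_kernel Cᵀ (by rw [rank_transpose]; exact hC)
    rw [hx0, Matrix.mulVec_zero, zero_add] at h2
    exact h2
  rw [hvdec, hx0, hy0, hz0]
  funext i; rcases i with i | i | i <;> rfl
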